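/- The class of C₄-free graphs has unbounded clique-width: for every k ≥ 1 there exists a finite simple graph containing no cycle of length 4 as a subgraph whose clique-width is strictly greater than k. -/

import Mathlib

/-- The color-controlled join of two vertex-disjoint colored graphs:
disjoint union plus all edges between a vertex of `G₁` colored `i` and a vertex of
`G₂` colored `j` for `(i,j) ∈ S`. -/
def joinGraph {k : ℕ} {α β : Type*} (G₁ : SimpleGraph α) (G₂ : SimpleGraph β)
    (c₁ : α → Fin k) (c₂ : β → Fin k) (S : Set (Fin k × Fin k)) : SimpleGraph (α ⊕ β) where
  Adj x y :=
    match x, y with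
    | Sum.inl a, Sum.inl b => G₁.Adj a b
    | Sum.inr a, Sum.inr b => G₂.Adj a b
    | Sum.inl a, Sum.inr b => (c₁ a, c₂ b) ∈ S
    | Sum.inr b, Sum.inl a => (c₁ a, c₂ b) ∈ S
  symm := by
    constructor
    rintro (a | a) (b | b) h
    · exact G₁.symm.symm _ _ h
    · exact h
    · exact h
    · exact G₂.symm.symm _ _ h
  loopless := by
    constructor
    rintro (a | a) h
    · exact G₁.loopless.irrefl a h
    · exact G₂.loopless.irrefl a h

/-- Add all edges between vertices colored `i` and vertices colored `j`. -/
def addColorEdges {k : ℕ} {α : Type*} (G : SimpleGraph α) (c : α → Fin k)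
    (i j : Fin k) : SimpleGraph α where
  Adj u v := G.Adj u v ∨ (u ≠ v ∧ ((c u = i ∧ c v = j) ∨ (c u = j ∧ c v = i)))
  symm := by
    constructor
    intro u v h
    rcases h with h | ⟨hne, hc⟩
    · exact Or.inl h.symm
    · exact Or.inr ⟨hne.symm, hc.symm.imp And.symm And.symm⟩
  loopless := by
    constructor
    intro v h
    rcases h with h | ⟨hne, _⟩
    · exact G.loopless.irrefl v h
    · exact hne rfl

/-- Clique-width expressions with colors in `Fin k`. -/
inductive CWExpr (k : ℕ) : Type
  | single (c : Fin k) : CWExpr k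
  | union (t₁ t₂ : CWExpr k) : CWExpr k
  | addEdges (i j : Fin k) (hij : i ≠ j) (t : CWExpr k) : CWExpr k
  | recolor (i j : Fin k) (t : CWExpr k) : CWExpr k

namespace CWExpr

variable {k : ℕ}

/-- The vertex set of the colored graph built by a clique-width expression. -/
def V : CWExpr k → Type
  | single _ => Unit
  | union t₁ t₂ => t₁.V ⊕ t₂.V
  | addEdges _ _ _ t => t.V
  | recolor _ _ t => t.V

/-- The coloring of the colored graph built by a clique-width expression. -/
def coloring : (t : CWExpr k) → t.V → Fin k
  | single c => fun _ => c
  | union t₁ t₂ => Sum.elim t₁.coloring t₂.coloring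
  | addEdges _ _ _ t => t.coloring
  | recolor i j t => fun v => if t.coloring v = i then j else t.coloring v

/-- The graph built by a clique-width expression. -/
def graph : (t : CWExpr k) → SimpleGraph t.V
  | single _ => ⊥
  | union t₁ t₂ => joinGraph t₁.graph t₂.graph t₁.coloring t₂.coloring ∅
  | addEdges i j _ t => addColorEdges t.graph t.coloring i j
  | recolor _ _ t => t.graph

end CWExpr

/-- `G` has clique-width at most `k`: it is the underlying graph of a colored graph
constructible by the clique-width operations with `k` colors. -/
def HasCliqueWidthLE {V : Type*} (G : SimpleGraph V) (k : ℕ) : Prop :=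
  ∃ t : CWExpr k, Nonempty (G ≃g t.graph)

/-- The clique-width of a graph: the least `k` such that `G` is constructible with `k` colors. -/
noncomputable def cliqueWidth {V : Type*} (G : SimpleGraph V) : ℕ :=
  sInf {k | HasCliqueWidthLE G k}


/-- `G` contains no cycle of length 4 as a subgraph. -/
def C4Free {V : Type*} (G : SimpleGraph V) : Prop :=
  ¬ ∃ u v w x : V, u ≠ v ∧ u ≠ w ∧ u ≠ x ∧ v ≠ w ∧ v ≠ x ∧ w ≠ x ∧
    G.Adj u v ∧ G.Adj v w ∧ G.Adj w x ∧ G.Adj x u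

----------------------------------------------------------------
-- auxiliary development
----------------------------------------------------------------

namespace CWAux

open CWExpr

variable {k : ℕ}

/-- Abstract effect of a sequence of `addEdges`/`recolor` operations. -/
abbrev Opk (k : ℕ) := (Fin k → Fin k) × Finset (Fin k × Fin k)

variable {α : Type*}

def opColor (o : Opk k) (c : α → Fin k) : α → Fin k := fun v => o.1 (c v)

def opGraph (o : Opk k) (G : SimpleGraph α) (c : α → Fin k) : SimpleGraph α where
  Adj u v := G.Adj u v ∨ (u ≠ v ∧ ((c u, c v) ∈ o.2 ∨ (c v, c u) ∈ o.2))
  symm := by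
    constructor
    intro u v h
    rcases h with h | ⟨hne, hc⟩
    · exact Or.inl h.symm
    · exact Or.inr ⟨hne.symm, hc.symm⟩
  loopless := by
    constructor
    intro v h
    rcases h with h | ⟨hne, _⟩
    · exact G.loopless.irrefl v h
    · exact hne rfl

def idOp : Opk k := (id, ∅)

def addOp (i j : Fin k) (o : Opk k) : Opk k :=
  (o.1, o.2 ∪ Finset.univ.filter
    (fun p => (o.1 p.1 = i ∧ o.1 p.2 = j) ∨ (o.1 p.1 = j ∧ o.1 p.2 = i)))

def recolOp (i j : Fin k) (o : Opk k) : Opk k :=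
  ((fun a => if a = i then j else a) ∘ o.1, o.2)

@[simp] lemma opGraph_adj (o : Opk k) (G : SimpleGraph α) (c : α → Fin k) (u v : α) :
    (opGraph o G c).Adj u v ↔
      G.Adj u v ∨ (u ≠ v ∧ ((c u, c v) ∈ o.2 ∨ (c v, c u) ∈ o.2)) := Iff.rfl

def IsBase : CWExpr k → Prop
  | .single _ => True
  | .union _ _ => True
  | _ => False

lemma peel (t : CWExpr k) :
    ∃ (b : CWExpr k) (o : Opk k) (e : t.V ≃ b.V), IsBase b ∧
      (∀ u v, t.graph.Adj u v ↔ (opGraph o b.graph b.coloring).Adj (e u) (e v)) ∧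
      (∀ v, t.coloring v = opColor o b.coloring (e v)) := by
  induction t with
  | single c =>
      refine ⟨.single c, idOp, Equiv.refl _, trivial, fun u v => ?_, fun v => rfl⟩
      simp [idOp, graph]
  | union t₁ t₂ ih₁ ih₂ =>
      refine ⟨.union t₁ t₂, idOp, Equiv.refl _, trivial, fun u v => ?_, fun v => rfl⟩
      simp [idOp]
  | addEdges i j hij t ih =>
      obtain ⟨b, o, e, hb, hadj, hcol⟩ := ih
      refine ⟨b, addOp i j o, e, hb, fun u v => ?_, fun v => hcol v⟩
      have hne : u ≠ v ↔ e u ≠ e v := by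
        constructor
        · exact fun h h' => h (e.injective h')
        · exact fun h h' => h (by rw [h'])
      show t.graph.Adj u v ∨ _ ↔ _
      rw [hadj u v, hcol u, hcol v]
      simp only [opGraph_adj, addOp, Finset.mem_union, Finset.mem_filter,
        Finset.mem_univ, true_and, opColor]
      tauto
  | recolor i j t ih =>
      obtain ⟨b, o, e, hb, hadj, hcol⟩ := ih
      refine ⟨b, recolOp i j o, e, hb, fun u v => ?_, fun v => ?_⟩
      · show t.graph.Adj u v ↔ _
        rw [hadj u v]
        exact Iff.rfl
      · show (if t.coloring v = i then j else t.coloring v) = _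
        rw [hcol v]
        rfl

lemma nonempty_V (t : CWExpr k) : Nonempty t.V := by
  induction t with
  | single c => exact ⟨()⟩
  | union t₁ t₂ ih₁ ih₂ => exact ⟨Sum.inl ih₁.some⟩
  | addEdges i j hij t ih => exact ih
  | recolor i j t ih => exact ih

end CWAux

@[simp] lemma addColorEdges_adj {k : ℕ} {α : Type*} (G : SimpleGraph α) (c : α → Fin k)
    (i j : Fin k) (u v : α) :
    (addColorEdges G c i j).Adj u v ↔
      G.Adj u v ∨ (u ≠ v ∧ ((c u = i ∧ c v = j) ∨ (c u = j ∧ c v = i))) := Iff.rfl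

namespace CWAux
open CWExpr
variable {k : ℕ}

section Mono

variable {m m' : ℕ}

def castE (h : m ≤ m') : CWExpr m → CWExpr m'
  | .single c => .single (Fin.castLE h c)
  | .union t₁ t₂ => .union (castE h t₁) (castE h t₂)
  | .addEdges i j hij t =>
      .addEdges (Fin.castLE h i) (Fin.castLE h j)
        (fun he => hij (Fin.castLE_injective h he)) (castE h t)
  | .recolor i j t => .recolor (Fin.castLE h i) (Fin.castLE h j) (castE h t)

lemma castE_spec (h : m ≤ m') : ∀ t : CWExpr m,
    ∃ e : t.V ≃ (castE h t).V,
      (∀ u v, t.graph.Adj u v ↔ (castE h t).graph.Adj (e u) (e v)) ∧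
      (∀ v, (castE h t).coloring (e v) = Fin.castLE h (t.coloring v)) := by
  intro t
  induction t with
  | single c => exact ⟨Equiv.refl _, fun u v => by simp [castE, graph], fun v => rfl⟩
  | union t₁ t₂ ih₁ ih₂ =>
      obtain ⟨e₁, ha₁, hc₁⟩ := ih₁
      obtain ⟨e₂, ha₂, hc₂⟩ := ih₂
      refine ⟨Equiv.sumCongr e₁ e₂, fun u v => ?_, fun v => ?_⟩
      · rcases u with u | u <;> rcases v with v | v
        · exact ha₁ u v
        · exact Iff.rfl
        · exact Iff.rfl
        · exact ha₂ u v
      · rcases v with v | v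
        · exact hc₁ v
        · exact hc₂ v
  | addEdges i j hij t ih =>
      obtain ⟨e, ha, hc⟩ := ih
      refine ⟨e, fun u v => ?_, fun v => hc v⟩
      show (addColorEdges t.graph t.coloring i j).Adj u v ↔
        (addColorEdges (castE h t).graph (castE h t).coloring
          (Fin.castLE h i) (Fin.castLE h j)).Adj (e u) (e v)
      revert u v
      intro (u : t.V) (v : t.V)
      rw [addColorEdges_adj, addColorEdges_adj, ha u v, hc u, hc v]
      have hne : u ≠ v ↔ e u ≠ e v :=
        ⟨fun hh h' => hh (e.injective h'), fun hh h' => hh (by rw [h'])⟩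
      rw [← hne]
      simp only [Fin.castLE_inj]
  | recolor i j t ih =>
      obtain ⟨e, ha, hc⟩ := ih
      refine ⟨e, fun u v => ha u v, fun v => ?_⟩
      show (if (castE h t).coloring (e v) = Fin.castLE h i then Fin.castLE h j
          else (castE h t).coloring (e v)) =
        Fin.castLE h (if t.coloring v = i then j else t.coloring v)
      rw [hc v]
      by_cases hcc : t.coloring v = i
      · simp [hcc]
      · rw [if_neg (fun he => hcc (Fin.castLE_injective h he)), if_neg hcc]

lemma hasCliqueWidthLE_mono {V : Type*} {G : SimpleGraph V} {m m' : ℕ}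
    (hmm : m ≤ m') (hG : HasCliqueWidthLE G m) : HasCliqueWidthLE G m' := by
  obtain ⟨t, ⟨f⟩⟩ := hG
  obtain ⟨e, ha, _⟩ := castE_spec hmm t
  refine ⟨castE hmm t, ⟨⟨f.toEquiv.trans e, ?_⟩⟩⟩
  intro u v
  show (castE hmm t).graph.Adj (e (f u)) (e (f v)) ↔ G.Adj u v
  rw [← ha (f u) (f v)]
  exact f.map_rel_iff

end Mono

section Upper

lemma discreteExpr : ∀ (n : ℕ), 0 < n → ∀ (f : Fin n → Fin k),
    ∃ (t : CWExpr k) (e : Fin n ≃ t.V),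
      (∀ u v, ¬ t.graph.Adj u v) ∧ (∀ v, t.coloring (e v) = f v) := by
  intro n
  induction n with
  | zero => intro h; omega
  | succ n ih =>
      intro _ f
      rcases Nat.eq_zero_or_pos n with hn | hn
      · subst hn
        refine ⟨.single (f 0), (Equiv.ofUnique (Fin 1) Unit), fun u v h => h.elim, ?_⟩
        intro v
        have hv : v = 0 := Fin.ext (by have := v.isLt; omega)
        rw [hv]; rfl
      · obtain ⟨t, e, hadj, hcol⟩ := ih hn (fun i => f i.castSucc)
        refine ⟨.union t (.single (f (Fin.last n))),
          (finSumFinEquiv.symm.trans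
            (Equiv.sumCongr e (Equiv.ofUnique (Fin 1) Unit))), fun u v h => ?_, ?_⟩
        · rcases u with x | x <;> rcases v with y | y
          · exact hadj x y h
          · exact h
          · exact h
          · exact h
        · intro v
          rcases hv : finSumFinEquiv.symm v with y | y <;>
            (show (CWExpr.union t (.single (f (Fin.last n)))).coloring
              (Sum.map e (Equiv.ofUnique (Fin 1) Unit) (finSumFinEquiv.symm v)) = f v
             rw [hv])
          · have hvv : v = Fin.castSucc y := by
              have h2 := congrArg finSumFinEquiv hv
              rw [Equiv.apply_symm_apply] at h2
              rw [h2, finSumFinEquiv_apply_left]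
              rfl
            show t.coloring (e y) = f v
            rw [hcol y, hvv]
          · have hvv : v = Fin.last n := by
              have h2 := congrArg finSumFinEquiv hv
              rw [Equiv.apply_symm_apply] at h2
              rw [h2, finSumFinEquiv_apply_right]
              have hy : y = 0 := Fin.ext (by have := y.isLt; omega)
              rw [hy]
              rfl
            rw [hvv]
            rfl

def addPairs : List {p : Fin k × Fin k // p.1 ≠ p.2} → CWExpr k → CWExpr k
  | [], t => t
  | p :: l, t => .addEdges p.1.1 p.1.2 p.2 (addPairs l t)

lemma addPairs_spec : ∀ (l : List {p : Fin k × Fin k // p.1 ≠ p.2}) (t : CWExpr k),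
    ∃ e : t.V ≃ (addPairs l t).V,
      (∀ v, (addPairs l t).coloring (e v) = t.coloring v) ∧
      (∀ u v, (addPairs l t).graph.Adj (e u) (e v) ↔ t.graph.Adj u v ∨
        (u ≠ v ∧ ∃ p ∈ l, ((p : Fin k × Fin k).1 = t.coloring u ∧ (p : Fin k × Fin k).2 = t.coloring v) ∨
          ((p : Fin k × Fin k).1 = t.coloring v ∧ (p : Fin k × Fin k).2 = t.coloring u))) := by
  intro l
  induction l with
  | nil =>
      intro t
      exact ⟨Equiv.refl _, fun v => rfl, fun u v => by simp [addPairs]; exact Iff.rfl⟩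
  | cons p l ih =>
      intro t
      obtain ⟨e, hcol, hadj⟩ := ih t
      refine ⟨e, fun v => hcol v, fun u v => ?_⟩
      show (addColorEdges (addPairs l t).graph (addPairs l t).coloring
        p.1.1 p.1.2).Adj (e u) (e v) ↔ _
      rw [addColorEdges_adj, hadj u v, hcol u, hcol v]
      have hne : u ≠ v ↔ e u ≠ e v :=
        ⟨fun hh h' => hh (e.injective h'), fun hh h' => hh (by rw [h'])⟩
      simp only [List.mem_cons]
      constructor
      · rintro ((h | ⟨h1, q, hq, h2⟩) | ⟨h1, h2⟩)
        · exact Or.inl h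
        · exact Or.inr ⟨h1, q, Or.inr hq, h2⟩
        · refine Or.inr ⟨hne.mpr h1, p, Or.inl rfl, ?_⟩
          tauto
      · rintro (h | ⟨h1, q, (rfl | hq), h2⟩)
        · exact Or.inl (Or.inl h)
        · refine Or.inr ⟨hne.mp h1, ?_⟩
          tauto
        · exact Or.inl (Or.inr ⟨h1, q, hq, h2⟩)

lemma hasCliqueWidthLE_card {n : ℕ} (hn : 0 < n) (G : SimpleGraph (Fin n)) :
    HasCliqueWidthLE G n := by
  classical
  obtain ⟨t0, e0, hadj0, hcol0⟩ := discreteExpr (k := n) n hn id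
  set l : List {p : Fin n × Fin n // p.1 ≠ p.2} :=
    ((Finset.univ.filter (fun p : Fin n × Fin n => G.Adj p.1 p.2)).attach.toList.map
      (fun q => ⟨q.1, G.ne_of_adj (by
        have h := q.2
        rw [Finset.mem_filter] at h
        exact h.2)⟩)) with hl
  obtain ⟨e1, hcol1, hadj1⟩ := addPairs_spec l t0
  refine ⟨addPairs l t0, ⟨⟨e0.trans e1, ?_⟩⟩⟩
  intro u v
  show (addPairs l t0).graph.Adj (e1 (e0 u)) (e1 (e0 v)) ↔ G.Adj u v
  rw [hadj1, hcol0, hcol0]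
  simp only [id]
  constructor
  · rintro (h | ⟨h1, q, hq, h2⟩)
    · exact absurd h (hadj0 _ _)
    · rw [hl] at hq
      simp only [List.mem_map, Finset.mem_toList, Finset.mem_attach, true_and] at hq
      obtain ⟨r, hr⟩ := hq
      have hr2 := (Finset.mem_filter.mp r.2).2
      rcases h2 with ⟨ha, hb⟩ | ⟨ha, hb⟩
      · rw [← hr] at ha hb
        simp only at ha hb
        rw [← ha, ← hb]; exact hr2
      · rw [← hr] at ha hb
        simp only at ha hb
        rw [← ha, ← hb]; exact hr2.symm
  · intro h
    have hne := G.ne_of_adj h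
    refine Or.inr ⟨fun hh => hne (e0.injective hh), ⟨(u, v), hne⟩, ?_, Or.inl ⟨rfl, rfl⟩⟩
    rw [hl]
    simp only [List.mem_map, Finset.mem_toList, Finset.mem_attach, true_and]
    exact ⟨⟨(u, v), Finset.mem_filter.mpr ⟨Finset.mem_univ _, h⟩⟩, Subtype.ext rfl⟩

end Upper
end CWAux

namespace CWAux
open CWExpr

section Count

variable (k : ℕ)

/-- colored graphs on `Fin n` realizable by a `k`-color clique-width expression -/
def Rset (n : ℕ) : Set (SimpleGraph (Fin n) × (Fin n → Fin k)) :=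
  {p | ∃ (t : CWExpr k) (e : Fin n ≃ t.V),
      (∀ u v, p.1.Adj u v ↔ t.graph.Adj (e u) (e v)) ∧ ∀ v, p.2 v = t.coloring (e v)}

variable {k}

noncomputable def idxf {n : ℕ} (A : Finset (Fin n)) (v : Fin n) : Fin A.card ⊕ Fin Aᶜ.card :=
  if h : v ∈ A then Sum.inl (A.equivFin ⟨v, h⟩)
  else Sum.inr (Aᶜ.equivFin ⟨v, Finset.mem_compl.mpr h⟩)

noncomputable def recon {n : ℕ} (A : Finset (Fin n)) (o : Opk k)
    (p₁ : SimpleGraph (Fin A.card) × (Fin A.card → Fin k))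
    (p₂ : SimpleGraph (Fin Aᶜ.card) × (Fin Aᶜ.card → Fin k)) :
    SimpleGraph (Fin n) × (Fin n → Fin k) :=
  (opGraph o ((joinGraph p₁.1 p₂.1 p₁.2 p₂.2 ∅).comap (idxf A))
      (fun v => Sum.elim p₁.2 p₂.2 (idxf A v)),
   opColor o (fun v => Sum.elim p₁.2 p₂.2 (idxf A v)))

lemma Rset_decomp {n : ℕ} (hn : 2 ≤ n) {p : SimpleGraph (Fin n) × (Fin n → Fin k)}
    (hp : p ∈ Rset k n) :
    ∃ (A : Finset (Fin n)), A ≠ ∅ ∧ A ≠ Finset.univ ∧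
      ∃ (o : Opk k), ∃ p₁ ∈ Rset k A.card, ∃ p₂ ∈ Rset k Aᶜ.card,
        p = recon A o p₁ p₂ := by
  classical
  obtain ⟨t, e, hadj, hcol⟩ := hp
  obtain ⟨b, o, e₂, hb, hadj₂, hcol₂⟩ := peel t
  cases b with
  | single c =>
      exfalso
      have e'' : Fin n ≃ Unit := e.trans e₂
      have hcard := Fintype.card_congr e''
      simp at hcard
      omega
  | addEdges i j hij s => exact hb.elim
  | recolor i j s => exact hb.elim
  | union t₁ t₂ =>
      obtain ⟨e', hadj', hcol'⟩ :
          ∃ e' : Fin n ≃ (t₁.V ⊕ t₂.V),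
            (∀ u v : Fin n, p.1.Adj u v ↔
              (opGraph o (joinGraph t₁.graph t₂.graph t₁.coloring t₂.coloring ∅)
                (Sum.elim t₁.coloring t₂.coloring)).Adj (e' u) (e' v)) ∧
            (∀ v, p.2 v = opColor o (Sum.elim t₁.coloring t₂.coloring) (e' v)) :=
        ⟨e.trans e₂, fun u v => (hadj u v).trans (hadj₂ (e u) (e v)),
          fun v => (hcol v).trans (hcol₂ (e v))⟩
      clear hadj hcol hadj₂ hcol₂
      set A : Finset (Fin n) := Finset.univ.filter (fun v => (e' v).isLeft) with hA
      have hmemA : ∀ v, v ∈ A ↔ (e' v).isLeft := by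
        intro v; simp [hA]
      have hLmem : ∀ x : {x // x ∈ A}, (e' x.1).isLeft = true := fun x => (hmemA x.1).mp x.2
      have hRmem : ∀ x : {x // x ∈ Aᶜ}, (e' x.1).isRight = true := by
        intro x
        have hx := x.2
        rw [Finset.mem_compl, hmemA] at hx
        exact Sum.not_isLeft.mp hx
      let eL : {x // x ∈ A} ≃ t₁.V :=
        { toFun := fun x => (e' x.1).getLeft (hLmem x)
          invFun := fun y => ⟨e'.symm (Sum.inl y), by
            rw [hmemA, Equiv.apply_symm_apply]; rfl⟩
          left_inv := fun x => Subtype.ext (by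
            show e'.symm (Sum.inl ((e' x.1).getLeft (hLmem x))) = x.1
            rw [Sum.inl_getLeft]
            exact e'.symm_apply_apply x.1)
          right_inv := fun y => by
            apply Sum.inl.inj
            rw [Sum.inl_getLeft, Equiv.apply_symm_apply] }
      let eR : {x // x ∈ Aᶜ} ≃ t₂.V :=
        { toFun := fun x => (e' x.1).getRight (hRmem x)
          invFun := fun y => ⟨e'.symm (Sum.inr y), by
            rw [Finset.mem_compl, hmemA, Equiv.apply_symm_apply]
            simp⟩
          left_inv := fun x => Subtype.ext (by
            show e'.symm (Sum.inr ((e' x.1).getRight (hRmem x))) = x.1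
            rw [Sum.inr_getRight]
            exact e'.symm_apply_apply x.1)
          right_inv := fun y => by
            apply Sum.inr.inj
            rw [Sum.inr_getRight, Equiv.apply_symm_apply] }
      let comp1 : Fin A.card ≃ t₁.V := A.equivFin.symm.trans eL
      let comp2 : Fin Aᶜ.card ≃ t₂.V := Aᶜ.equivFin.symm.trans eR
      have hkey : ∀ v : Fin n, e' v = Sum.map comp1 comp2 (idxf A v) := by
        intro v
        by_cases hv : v ∈ A
        · rw [idxf, dif_pos hv]
          show e' v = Sum.inl (comp1 (A.equivFin ⟨v, hv⟩))
          have h2 : comp1 (A.equivFin ⟨v, hv⟩) = eL ⟨v, hv⟩ := by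
            simp [comp1, Equiv.symm_apply_apply]
          rw [h2]
          exact (Sum.inl_getLeft _ _).symm
        · rw [idxf, dif_neg hv]
          show e' v = Sum.inr (comp2 (Aᶜ.equivFin ⟨v, Finset.mem_compl.mpr hv⟩))
          have h2 : comp2 (Aᶜ.equivFin ⟨v, Finset.mem_compl.mpr hv⟩) =
              eR ⟨v, Finset.mem_compl.mpr hv⟩ := by
            simp [comp2, Equiv.symm_apply_apply]
          rw [h2]
          exact (Sum.inr_getRight _ _).symm
      have hc0 : ∀ v, Sum.elim (fun x => t₁.coloring (comp1 x)) (fun x => t₂.coloring (comp2 x))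
          (idxf A v) = Sum.elim t₁.coloring t₂.coloring (e' v) := by
        intro v
        rw [hkey v]
        rcases idxf A v with x | x <;> rfl
      have hne : ∀ u v : Fin n, (u ≠ v) ↔ (e' u ≠ e' v) :=
        fun u v => ⟨fun hh h' => hh (e'.injective h'), fun hh h' => hh (by rw [h'])⟩
      have hjoin : ∀ u v : Fin n,
          (joinGraph (t₁.graph.comap (fun x => comp1 x)) (t₂.graph.comap (fun x => comp2 x))
            (fun x => t₁.coloring (comp1 x)) (fun x => t₂.coloring (comp2 x)) ∅).Adj
              (idxf A u) (idxf A v) ↔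
          (joinGraph t₁.graph t₂.graph t₁.coloring t₂.coloring ∅).Adj (e' u) (e' v) := by
        intro u v
        rw [hkey u, hkey v]
        rcases idxf A u with x | x <;> rcases idxf A v with y | y <;> exact Iff.rfl
      refine ⟨A, ?_, ?_, o,
        (t₁.graph.comap (fun x => comp1 x), fun x => t₁.coloring (comp1 x)),
        ⟨t₁, comp1, fun u v => Iff.rfl, fun v => rfl⟩,
        (t₂.graph.comap (fun x => comp2 x), fun x => t₂.coloring (comp2 x)),
        ⟨t₂, comp2, fun u v => Iff.rfl, fun v => rfl⟩, ?_⟩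
      · obtain ⟨x⟩ := nonempty_V t₁
        have hx : e'.symm (Sum.inl x) ∈ A := by
          rw [hmemA, Equiv.apply_symm_apply]; rfl
        exact fun h => by rw [h] at hx; exact absurd hx (Finset.notMem_empty _)
      · obtain ⟨y⟩ := nonempty_V t₂
        have hy : e'.symm (Sum.inr y) ∉ A := by
          rw [hmemA, Equiv.apply_symm_apply]; simp
        exact fun h => hy (h ▸ Finset.mem_univ _)
      · refine Prod.ext ?_ ?_
        · ext u v
          show p.1.Adj u v ↔ (opGraph o
            ((joinGraph (t₁.graph.comap (fun x => comp1 x)) (t₂.graph.comap (fun x => comp2 x))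
              (fun x => t₁.coloring (comp1 x)) (fun x => t₂.coloring (comp2 x)) ∅).comap (idxf A))
            (fun w => Sum.elim (fun x => t₁.coloring (comp1 x)) (fun x => t₂.coloring (comp2 x))
              (idxf A w))).Adj u v
          rw [hadj' u v, opGraph_adj, opGraph_adj, SimpleGraph.comap_adj]
          rw [hjoin u v, hc0 u, hc0 v, hne u v]
        · funext v
          rw [hcol' v]
          exact (congrArg o.1 (hc0 v)).symm

end Count
end CWAux

namespace CWAux

section NcardHelpers

lemma ncard_biUnion_le {ι α : Type*} [Finite α] (s : Finset ι) (F : ι → Set α) :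
    (⋃ i ∈ s, F i).ncard ≤ ∑ i ∈ s, (F i).ncard := by
  classical
  induction s using Finset.induction with
  | empty => simp
  | insert _ _ hns ih =>
      rename_i a s
      rw [Finset.sum_insert hns]
      have hu : (⋃ i ∈ insert a s, F i) = F a ∪ ⋃ i ∈ s, F i := by
        simp [Set.biUnion_insert]
      rw [hu]
      exact le_trans (Set.ncard_union_le _ _) (Nat.add_le_add_left ih _)

lemma ncard_prod_le {α β : Type*} [Finite α] [Finite β] (s : Set α) (t : Set β) :
    (s ×ˢ t).ncard ≤ s.ncard * t.ncard := by
  classical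
  have hs := s.toFinite
  have heq : s ×ˢ t = ⋃ x ∈ hs.toFinset, Prod.mk x '' t := by
    ext ⟨a, b⟩
    simp only [Set.mem_iUnion, Set.Finite.mem_toFinset, Set.mem_image, Set.mem_prod]
    constructor
    · rintro ⟨ha, hb⟩
      exact ⟨a, ha, b, hb, rfl⟩
    · rintro ⟨i, hi, x, hx, heq⟩
      rw [Prod.mk.injEq] at heq
      obtain ⟨rfl, rfl⟩ := heq
      exact ⟨hi, hx⟩
  rw [heq]
  refine le_trans (ncard_biUnion_le _ _) ?_
  refine le_trans (Finset.sum_le_sum (fun x _ => Set.ncard_image_le (s := t))) ?_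
  rw [Finset.sum_const, smul_eq_mul, Set.ncard_eq_toFinset_card s hs]

end NcardHelpers

section CountBound

variable {k : ℕ}

/-- the base constant in the counting bound -/
def Ek (k : ℕ) : ℕ := k ^ k * 2 ^ (k * k) + k

lemma one_le_Ek (hk : 1 ≤ k) : 1 ≤ Ek k := by
  unfold Ek; omega

lemma card_Opk_le : Nat.card (Opk k) ≤ Ek k := by
  classical
  rw [Nat.card_eq_fintype_card, Fintype.card_prod, Fintype.card_finset, Fintype.card_fun]
  simp only [Fintype.card_fin, Fintype.card_prod]
  exact Nat.le_add_right _ _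

lemma fact_mul_fact_le {a b : ℕ} (ha : 1 ≤ a) (hb : 1 ≤ b) :
    a.factorial * b.factorial ≤ (a + b - 1).factorial := by
  induction b with
  | zero => omega
  | succ b ih =>
      rcases Nat.eq_zero_or_pos b with hb0 | hb0
      · subst hb0
        simp [Nat.factorial]
      · have h1 := ih hb0
        have h2 : a + (b + 1) - 1 = (a + b - 1) + 1 := by omega
        rw [h2, Nat.factorial_succ, Nat.factorial_succ]
        calc a.factorial * ((b + 1) * b.factorial)
            = (b + 1) * (a.factorial * b.factorial) := by ring
          _ ≤ (b + 1) * (a + b - 1).factorial := Nat.mul_le_mul_left _ h1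
          _ ≤ (a + b - 1 + 1) * (a + b - 1).factorial := by
              apply Nat.mul_le_mul_right
              omega

lemma Rset_one_le (k : ℕ) : (Rset k 1).ncard ≤ k := by
  classical
  have hsub : Rset k 1 ⊆ Set.range (fun c : Fin k =>
      ((⊥ : SimpleGraph (Fin 1)), fun _ : Fin 1 => c)) := by
    rintro ⟨G, c⟩ hp
    refine ⟨c 0, ?_⟩
    refine (Prod.ext ?_ ?_).symm
    · ext u v
      simp only [SimpleGraph.bot_adj, iff_false]
      intro h
      have huv : u = v := Fin.ext (by have := u.isLt; have := v.isLt; omega)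
      rw [huv] at h
      exact G.irrefl h
    · funext v
      have hv : v = 0 := Fin.ext (by have := v.isLt; omega)
      rw [hv]
  calc (Rset k 1).ncard ≤ (Set.range fun c : Fin k =>
        ((⊥ : SimpleGraph (Fin 1)), fun _ : Fin 1 => c)).ncard :=
        Set.ncard_le_ncard hsub (Set.toFinite _)
    _ = ((fun c : Fin k => ((⊥ : SimpleGraph (Fin 1)), fun _ : Fin 1 => c)) '' Set.univ).ncard := by
        rw [Set.image_univ]
    _ ≤ (Set.univ : Set (Fin k)).ncard := Set.ncard_image_le (Set.toFinite _)
    _ = k := by rw [Set.ncard_univ, Nat.card_eq_fintype_card, Fintype.card_fin]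

lemma Rset_ncard_le (hk : 1 ≤ k) : ∀ n : ℕ, 1 ≤ n →
    (Rset k n).ncard ≤ n.factorial ^ 2 * Ek k ^ (2 * n - 1) := by
  intro n
  induction n using Nat.strong_induction_on with
  | _ n ih =>
    intro hn
    rcases eq_or_lt_of_le hn with h1 | h2
    · rw [← h1]
      simp only [Nat.factorial_one, one_pow, one_mul]
      calc (Rset k 1).ncard ≤ k := Rset_one_le k
        _ ≤ Ek k := Nat.le_add_left _ _
        _ = Ek k ^ (2 * 1 - 1) := by norm_num
    · classical
      have hn2 : 2 ≤ n := h2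
      set F : ℕ := Ek k ^ (2 * n - 1) with hF
      set I : Finset (Finset (Fin n)) :=
        Finset.univ.powerset.filter (fun A => A ≠ ∅ ∧ A ≠ Finset.univ) with hI
      have hsub : Rset k n ⊆ ⋃ A ∈ I, (fun q : Opk k ×
          ((SimpleGraph (Fin A.card) × (Fin A.card → Fin k)) ×
           (SimpleGraph (Fin Aᶜ.card) × (Fin Aᶜ.card → Fin k))) =>
            recon A q.1 q.2.1 q.2.2) ''
          (Set.univ ×ˢ (Rset k A.card ×ˢ Rset k Aᶜ.card)) := by
        intro p hp
        obtain ⟨A, hA0, hA1, o, p₁, hp₁, p₂, hp₂, hpe⟩ := Rset_decomp hn2 hp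
        have hAmem : A ∈ I := by
          rw [hI, Finset.mem_filter]
          exact ⟨Finset.mem_powerset.mpr (Finset.subset_univ _), hA0, hA1⟩
        exact Set.mem_biUnion hAmem ⟨(o, p₁, p₂), ⟨Set.mem_univ _, hp₁, hp₂⟩, hpe.symm⟩
      refine le_trans (Set.ncard_le_ncard hsub (Set.toFinite _)) ?_
      refine le_trans (ncard_biUnion_le _ _) ?_
      have hterm : ∀ A ∈ I, ((fun q : Opk k ×
          ((SimpleGraph (Fin A.card) × (Fin A.card → Fin k)) ×
           (SimpleGraph (Fin Aᶜ.card) × (Fin Aᶜ.card → Fin k))) =>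
            recon A q.1 q.2.1 q.2.2) ''
          (Set.univ ×ˢ (Rset k A.card ×ˢ Rset k Aᶜ.card))).ncard ≤
          (A.card.factorial * (n - A.card).factorial) ^ 2 * F := by
        intro A hAI
        rw [hI, Finset.mem_filter] at hAI
        obtain ⟨-, hA0, hA1⟩ := hAI
        have hcard1 : 1 ≤ A.card := Finset.card_pos.mpr (Finset.nonempty_iff_ne_empty.mpr hA0)
        have hcardn : A.card ≤ n := le_trans (Finset.card_le_univ A) (by simp)
        have hcardlt : A.card < n := by
          rcases lt_or_eq_of_le hcardn with h | h
          · exact h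
          · exact absurd (Finset.eq_univ_of_card A (by rw [h]; simp)) hA1
        have hcc : Aᶜ.card = n - A.card := by
          have h3 := Finset.card_add_card_compl A
          simp only [Fintype.card_fin] at h3
          omega
        have hcc1 : 1 ≤ Aᶜ.card := by omega
        have hccn : Aᶜ.card < n := by omega
        refine le_trans (Set.ncard_image_le (Set.toFinite _)) ?_
        refine le_trans (ncard_prod_le _ _) ?_
        refine le_trans (Nat.mul_le_mul (le_of_eq (Set.ncard_univ _)) (ncard_prod_le _ _)) ?_
        have b1 := ih A.card hcardlt hcard1
        have b2 := ih Aᶜ.card hccn hcc1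
        refine le_trans (Nat.mul_le_mul card_Opk_le (Nat.mul_le_mul b1 b2)) (le_of_eq ?_)
        have hEk : Ek k * (Ek k ^ (2 * A.card - 1) * Ek k ^ (2 * Aᶜ.card - 1)) = F := by
          rw [hF, ← pow_add, ← pow_succ']
          congr 1
          omega
        calc Ek k * (A.card.factorial ^ 2 * Ek k ^ (2 * A.card - 1) *
              (Aᶜ.card.factorial ^ 2 * Ek k ^ (2 * Aᶜ.card - 1)))
            = (A.card.factorial * Aᶜ.card.factorial) ^ 2 *
              (Ek k * (Ek k ^ (2 * A.card - 1) * Ek k ^ (2 * Aᶜ.card - 1))) := by ring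
          _ = (A.card.factorial * (n - A.card).factorial) ^ 2 * F := by rw [hEk, hcc]
      refine le_trans (Finset.sum_le_sum hterm) ?_
      -- now regroup the sum over I by cardinality
      have hI_eq : I = (Finset.Ico 1 n).biUnion
          (fun a => Finset.powersetCard a Finset.univ) := by
        ext A
        rw [hI, Finset.mem_filter, Finset.mem_biUnion]
        constructor
        · rintro ⟨-, h0, hu⟩
          refine ⟨A.card, Finset.mem_Ico.mpr ⟨?_, ?_⟩, Finset.mem_powersetCard_univ.mpr rfl⟩
          · exact Finset.card_pos.mpr (Finset.nonempty_iff_ne_empty.mpr h0)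
          · have hle : A.card ≤ n := le_trans (Finset.card_le_univ A) (by simp)
            rcases lt_or_eq_of_le hle with h | h
            · exact h
            · exact absurd (Finset.eq_univ_of_card A (by rw [h]; simp)) hu
        · rintro ⟨a, ha, hA⟩
          rw [Finset.mem_powersetCard_univ] at hA
          rw [Finset.mem_Ico] at ha
          refine ⟨Finset.mem_powerset.mpr (Finset.subset_univ _), ?_, ?_⟩
          · intro h; rw [h] at hA; simp at hA; omega
          · intro h; rw [h, Finset.card_univ, Fintype.card_fin] at hA; omega
      have hdisj : ((Finset.Ico 1 n) : Set ℕ).PairwiseDisjoint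
          (fun a => Finset.powersetCard a (Finset.univ : Finset (Fin n))) := by
        intro a _ b _ hab
        refine Finset.disjoint_left.mpr ?_
        intro A hA hB
        rw [Finset.mem_powersetCard_univ] at hA hB
        exact hab (by omega)
      rw [hI_eq, Finset.sum_biUnion hdisj]
      have hinner : ∀ a ∈ Finset.Ico 1 n,
          (∑ A ∈ Finset.powersetCard a (Finset.univ : Finset (Fin n)),
            (A.card.factorial * (n - A.card).factorial) ^ 2 * F) =
          n.choose a * ((a.factorial * (n - a).factorial) ^ 2 * F) := by
        intro a _
        rw [Finset.sum_congr rfl (fun A hA => by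
          rw [Finset.mem_powersetCard_univ.mp hA]), Finset.sum_const, smul_eq_mul,
          Finset.card_powersetCard, Finset.card_univ, Fintype.card_fin]
      rw [Finset.sum_congr rfl hinner]
      have hper : ∀ a ∈ Finset.Ico 1 n,
          n.choose a * ((a.factorial * (n - a).factorial) ^ 2 * F) ≤
          n.factorial * (n - 1).factorial * F := by
        intro a ha
        rw [Finset.mem_Ico] at ha
        have hc : n.choose a * a.factorial * (n - a).factorial = n.factorial :=
          Nat.choose_mul_factorial_mul_factorial (le_of_lt ha.2)
        have hf : a.factorial * (n - a).factorial ≤ (n - 1).factorial := by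
          have h5 := fact_mul_fact_le ha.1 (b := n - a) (by omega)
          rwa [show a + (n - a) = n by omega] at h5
        calc n.choose a * ((a.factorial * (n - a).factorial) ^ 2 * F)
            = (n.choose a * a.factorial * (n - a).factorial) *
              ((a.factorial * (n - a).factorial) * F) := by ring
          _ = n.factorial * ((a.factorial * (n - a).factorial) * F) := by rw [hc]
          _ ≤ n.factorial * ((n - 1).factorial * F) :=
              Nat.mul_le_mul_left _ (Nat.mul_le_mul_right _ hf)
          _ = n.factorial * (n - 1).factorial * F := by ring
      refine le_trans (Finset.sum_le_sum hper) ?_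
      rw [Finset.sum_const, Nat.card_Ico, smul_eq_mul]
      have hlast : (n - 1) * (n - 1).factorial ≤ n.factorial := by
        calc (n - 1) * (n - 1).factorial ≤ n * (n - 1).factorial :=
          Nat.mul_le_mul_right _ (by omega)
        _ = n.factorial := Nat.mul_factorial_pred (by omega)
      calc (n - 1) * (n.factorial * (n - 1).factorial * F)
          = ((n - 1) * (n - 1).factorial) * n.factorial * F := by ring
        _ ≤ n.factorial * n.factorial * F :=
            Nat.mul_le_mul_right _ (Nat.mul_le_mul_right _ hlast)
        _ = n.factorial ^ 2 * F := by ring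

lemma count_cliqueWidthLE (hk : 1 ≤ k) {n : ℕ} (hn : 1 ≤ n) :
    {G : SimpleGraph (Fin n) | HasCliqueWidthLE G k}.ncard ≤
      n.factorial ^ 2 * Ek k ^ (2 * n) := by
  classical
  have hsub : {G : SimpleGraph (Fin n) | HasCliqueWidthLE G k} ⊆ Prod.fst '' Rset k n := by
    intro G hG
    obtain ⟨t, ⟨f⟩⟩ := hG
    exact ⟨(G, fun v => t.coloring (f v)),
      ⟨t, f.toEquiv, fun u v => (f.map_rel_iff).symm, fun v => rfl⟩, rfl⟩
  refine le_trans (Set.ncard_le_ncard hsub (Set.toFinite _)) ?_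
  refine le_trans (Set.ncard_image_le (Set.toFinite _)) ?_
  refine le_trans (Rset_ncard_le hk n hn) ?_
  apply Nat.mul_le_mul_left
  exact Nat.pow_le_pow_right (one_le_Ek hk) (by omega)

end CountBound
end CWAux

namespace CWAux

section Incidence

/-- The point/line incidence graph over `ZMod p`: points `(x,y)`, lines `(a,b)`
(representing `y = a x + b`). Two distinct points lie on at most one common line,
so this graph is `C₄`-free. -/
def IncG (p : ℕ) : SimpleGraph ((ZMod p × ZMod p) ⊕ (ZMod p × ZMod p)) where
  Adj x y :=
    match x, y with
    | Sum.inl P, Sum.inr L => P.2 = L.1 * P.1 + L.2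
    | Sum.inr L, Sum.inl P => P.2 = L.1 * P.1 + L.2
    | _, _ => False
  symm := by
    constructor
    rintro (P | P) (Q | Q) h
    · exact h.elim
    · exact h
    · exact h
    · exact h.elim
  loopless := by
    constructor
    rintro (P | P) h <;> exact h

lemma twoLines {p : ℕ} [Fact p.Prime] {P P' L L' : ZMod p × ZMod p}
    (h1 : P.2 = L.1 * P.1 + L.2) (h2 : P'.2 = L.1 * P'.1 + L.2)
    (h3 : P.2 = L'.1 * P.1 + L'.2) (h4 : P'.2 = L'.1 * P'.1 + L'.2) :
    P = P' ∨ L = L' := by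
  by_cases hx : P.1 = P'.1
  · left
    have hy : P.2 = P'.2 := by rw [h1, h2, hx]
    exact Prod.ext hx hy
  · right
    have h5 : (L.1 - L'.1) * (P.1 - P'.1) = 0 := by linear_combination h3 + h2 - h1 - h4
    have h6 : L.1 = L'.1 := by
      rcases mul_eq_zero.mp h5 with h | h
      · exact sub_eq_zero.mp h
      · exact absurd (sub_eq_zero.mp h) hx
    have h7 : L.2 = L'.2 := by
      have h8 := h1.symm.trans h3
      rw [h6] at h8
      exact add_left_cancel h8
    exact Prod.ext h6 h7

lemma c4free_IncG (p : ℕ) [Fact p.Prime] : C4Free (IncG p) := by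
  rintro ⟨u, v, w, x, huv, huw, hux, hvw, hvx, hwx, a1, a2, a3, a4⟩
  rcases u with P | P <;> rcases v with Q | Q <;> rcases w with R | R <;> rcases x with S | S
  all_goals first
    | exact a1
    | exact a2
    | exact a3
    | exact a4
    | skip
  -- case (inl P, inr Q, inl R, inr S)
  · have hPR : P ≠ R := fun h => huw (by rw [h])
    have hQS : Q ≠ S := fun h => hvx (by rw [h])
    rcases twoLines (L := Q) (L' := S) a1 a2 a4 a3 with h | h
    · exact hPR h
    · exact hQS h
  -- case (inr P, inl Q, inr R, inl S)
  · have hQS : Q ≠ S := fun h => hvx (by rw [h])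
    have hPR : P ≠ R := fun h => huw (by rw [h])
    rcases twoLines (L := P) (L' := R) a1 a4 a2 a3 with h | h
    · exact hQS h
    · exact hPR h

/-- the edge labelling: `(x, L) ↦` the edge between point `(x, L.1*x+L.2)` and line `L`. -/
def φm (p : ℕ) (q : ZMod p × (ZMod p × ZMod p)) : Sym2 ((ZMod p × ZMod p) ⊕ (ZMod p × ZMod p)) :=
  s(Sum.inl (q.1, q.2.1 * q.1 + q.2.2), Sum.inr q.2)

lemma φm_injective (p : ℕ) : Function.Injective (φm p) := by
  intro q q' h
  rw [φm, φm, Sym2.eq_iff] at h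
  rcases h with ⟨h1, h2⟩ | ⟨h1, h2⟩
  · have hq2 : q.2 = q'.2 := Sum.inr.inj h2
    have hq1 : q.1 = q'.1 := (Prod.mk.injEq _ _ _ _).mp (Sum.inl.inj h1) |>.1
    exact Prod.ext hq1 hq2
  · exact absurd h1 (by simp)

lemma φm_not_diag (p : ℕ) (q : ZMod p × (ZMod p × ZMod p)) : ¬ (φm p q).IsDiag := by
  rw [φm, Sym2.isDiag_iff_proj_eq]
  simp

/-- subgraph of the incidence graph determined by an edge subset -/
def subG (p : ℕ) (S : Finset (ZMod p × (ZMod p × ZMod p))) :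
    SimpleGraph ((ZMod p × ZMod p) ⊕ (ZMod p × ZMod p)) :=
  SimpleGraph.fromEdgeSet (↑(S.image (φm p)))

lemma subG_le (p : ℕ) (S : Finset (ZMod p × (ZMod p × ZMod p))) : subG p S ≤ IncG p := by
  intro u v h
  rw [subG, SimpleGraph.fromEdgeSet_adj] at h
  obtain ⟨he, hne⟩ := h
  rw [Finset.coe_image, Set.mem_image] at he
  obtain ⟨q, -, hq⟩ := he
  rw [φm, Sym2.eq_iff] at hq
  rcases hq with ⟨h1, h2⟩ | ⟨h1, h2⟩
  · rw [← h1, ← h2]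
    show (q.1, q.2.1 * q.1 + q.2.2).2 = q.2.1 * (q.1, q.2.1 * q.1 + q.2.2).1 + q.2.2
    rfl
  · rw [← h1, ← h2]
    show (q.1, q.2.1 * q.1 + q.2.2).2 = q.2.1 * (q.1, q.2.1 * q.1 + q.2.2).1 + q.2.2
    rfl

lemma subG_edgeSet (p : ℕ) (S : Finset (ZMod p × (ZMod p × ZMod p))) :
    (subG p S).edgeSet = ↑(S.image (φm p)) := by
  rw [subG, SimpleGraph.edgeSet_fromEdgeSet]
  ext e
  simp only [Set.mem_diff, Finset.mem_coe, Set.mem_setOf_eq]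
  constructor
  · exact fun h => h.1
  · intro h
    refine ⟨h, ?_⟩
    rw [Finset.mem_image] at h
    obtain ⟨q, -, hq⟩ := h
    rw [← hq]
    exact φm_not_diag p q

lemma subG_injective (p : ℕ) : Function.Injective (subG p) := by
  intro S S' h
  have he : (↑(S.image (φm p)) : Set (Sym2 ((ZMod p × ZMod p) ⊕ (ZMod p × ZMod p)))) =
      (↑(S'.image (φm p)) : Set (Sym2 ((ZMod p × ZMod p) ⊕ (ZMod p × ZMod p)))) := by
    rw [← subG_edgeSet, ← subG_edgeSet, h]
  have he2 : S.image (φm p) = S'.image (φm p) := Finset.coe_injective he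
  exact Finset.image_injective (φm_injective p) he2

lemma subG_c4free (p : ℕ) [Fact p.Prime] (S : Finset (ZMod p × (ZMod p × ZMod p))) :
    C4Free (subG p S) := by
  rintro ⟨u, v, w, x, huv, huw, hux, hvw, hvx, hwx, a1, a2, a3, a4⟩
  exact c4free_IncG p ⟨u, v, w, x, huv, huw, hux, hvw, hvx, hwx,
    subG_le p S a1, subG_le p S a2, subG_le p S a3, subG_le p S a4⟩

end Incidence

section Arith

lemma thirtytwo_mul_le (L : ℕ) (hL : 10 ≤ L) : 32 * L ≤ 2 ^ L := by
  induction L, hL using Nat.le_induction with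
  | base => norm_num
  | succ L hL ih =>
      have h32 : 32 ≤ 2 ^ L :=
        le_trans (by norm_num : (32:ℕ) ≤ 2 ^ 10) (Nat.pow_le_pow_right (by norm_num) hL)
      calc 32 * (L + 1) = 32 * L + 32 := by ring
        _ ≤ 2 ^ L + 2 ^ L := Nat.add_le_add ih h32
        _ = 2 ^ (L + 1) := by rw [pow_succ]; ring

lemma pow16_lt_two_pow {p : ℕ} (hp : 2 ^ 12 ≤ p) : p ^ 16 < 2 ^ p := by
  have hp0 : p ≠ 0 := by positivity
  set L := Nat.log 2 p with hLdef
  have hL12 : 12 ≤ L := (Nat.le_log_iff_pow_le (by norm_num) hp0).mpr hp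
  have h1 : p < 2 ^ (L + 1) := Nat.lt_pow_succ_log_self (by norm_num) p
  have h2 : p ^ 16 < (2 ^ (L + 1)) ^ 16 := Nat.pow_lt_pow_left h1 (by norm_num)
  have h3 : (2 ^ (L + 1)) ^ 16 = 2 ^ (16 * (L + 1)) := by rw [← pow_mul]; ring_nf
  have h4 : 16 * (L + 1) ≤ 32 * L := by omega
  have h5 : 32 * L ≤ 2 ^ L := thirtytwo_mul_le L (by omega)
  have h6 : 2 ^ L ≤ p := Nat.pow_log_le_self 2 hp0
  calc p ^ 16 < 2 ^ (16 * (L + 1)) := by rw [← h3]; exact h2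
    _ ≤ 2 ^ p := Nat.pow_le_pow_right (by norm_num) (by omega)

lemma main_arith {E p : ℕ} (hE : 1 ≤ E) (hp : 2 ^ 12 + 2 * E ≤ p) :
    (2 * p ^ 2).factorial ^ 2 * E ^ (2 * (2 * p ^ 2)) < 2 ^ (p ^ 3) := by
  obtain ⟨n, hn⟩ : ∃ n, n = 2 * p ^ 2 := ⟨_, rfl⟩
  rw [← hn]
  have hp12 : 2 ^ 12 ≤ p := by omega
  have hp1 : 1 ≤ p := by omega
  have h2E : 2 * E ≤ p := by omega
  have hnE : n * E ≤ p ^ 4 := by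
    calc n * E = p ^ 2 * (2 * E) := by rw [hn]; ring
      _ ≤ p ^ 2 * p := Nat.mul_le_mul_left _ h2E
      _ = p ^ 3 := by ring
      _ ≤ p ^ 4 := Nat.pow_le_pow_right hp1 (by norm_num)
  have hfact : n.factorial ≤ n ^ n := Nat.factorial_le_pow n
  have h1 : n.factorial ^ 2 * E ^ (2 * n) ≤ (n * E) ^ (2 * n) := by
    have hq : (n ^ n) ^ 2 = n ^ (2 * n) := by rw [← pow_mul, Nat.mul_comm]
    calc n.factorial ^ 2 * E ^ (2 * n) ≤ (n ^ n) ^ 2 * E ^ (2 * n) :=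
        Nat.mul_le_mul_right _ (Nat.pow_le_pow_left hfact 2)
      _ = n ^ (2 * n) * E ^ (2 * n) := by rw [hq]
      _ = (n * E) ^ (2 * n) := by rw [mul_pow]
  have h2 : (n * E) ^ (2 * n) ≤ (p ^ 4) ^ (2 * n) := Nat.pow_le_pow_left hnE _
  have h3 : (p ^ 4) ^ (2 * n) = (p ^ 16) ^ (p ^ 2) := by
    rw [← pow_mul, ← pow_mul]
    congr 1
    rw [hn]; ring
  have h4 : (p ^ 16) ^ (p ^ 2) < (2 ^ p) ^ (p ^ 2) :=
    Nat.pow_lt_pow_left (pow16_lt_two_pow hp12) (by positivity)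
  have h5 : (2 ^ p) ^ (p ^ 2) = 2 ^ (p ^ 3) := by
    rw [← pow_mul]
    congr 1
    ring
  calc n.factorial ^ 2 * E ^ (2 * n) ≤ (p ^ 4) ^ (2 * n) := le_trans h1 h2
    _ = (p ^ 16) ^ (p ^ 2) := h3
    _ < (2 ^ p) ^ (p ^ 2) := h4
    _ = 2 ^ (p ^ 3) := h5

end Arith
end CWAux

/-- The class of `C₄`-free graphs has unbounded clique-width: for every `k ≥ 1` there is
a finite simple `C₄`-free graph whose clique-width is strictly greater than `k`. -/
theorem C4_free_unbounded_cliqueWidth :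
    ∀ k : ℕ, 1 ≤ k → ∃ (n : ℕ) (G : SimpleGraph (Fin n)), C4Free G ∧ k < cliqueWidth G := by
  intro k hk
  by_contra hcon
  push_neg at hcon
  obtain ⟨p, hple, hp⟩ := Nat.exists_infinite_primes (2 ^ 12 + 2 * CWAux.Ek k)
  haveI : Fact p.Prime := ⟨hp⟩
  classical
  obtain ⟨n, hn⟩ : ∃ n, n = 2 * p ^ 2 := ⟨_, rfl⟩
  have hp1 : 1 ≤ p := hp.one_lt.le
  have hn1 : 1 ≤ n := by
    have h2 : 1 ≤ p ^ 2 := Nat.one_le_pow 2 p (by omega)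
    omega
  have hcard : Fintype.card ((ZMod p × ZMod p) ⊕ (ZMod p × ZMod p)) = n := by
    rw [hn]
    simp only [Fintype.card_sum, Fintype.card_prod, ZMod.card]
    ring
  set ε : Fin n ≃ ((ZMod p × ZMod p) ⊕ (ZMod p × ZMod p)) :=
    (Fintype.equivFinOfCardEq hcard).symm with hε
  set Ψ : Finset (ZMod p × (ZMod p × ZMod p)) → SimpleGraph (Fin n) :=
    fun S => (CWAux.subG p S).comap ε with hΨ
  have hΨc4 : ∀ S, C4Free (Ψ S) := by
    intro S
    rintro ⟨u, v, w, x, huv, huw, hux, hvw, hvx, hwx, a1, a2, a3, a4⟩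
    exact CWAux.subG_c4free p S ⟨ε u, ε v, ε w, ε x,
      fun h => huv (ε.injective h), fun h => huw (ε.injective h),
      fun h => hux (ε.injective h), fun h => hvw (ε.injective h),
      fun h => hvx (ε.injective h), fun h => hwx (ε.injective h),
      a1, a2, a3, a4⟩
  have hΨmem : ∀ S, HasCliqueWidthLE (Ψ S) k := by
    intro S
    have hle : cliqueWidth (Ψ S) ≤ k := hcon n (Ψ S) (hΨc4 S)
    have hne : {m | HasCliqueWidthLE (Ψ S) m}.Nonempty :=
      ⟨n, CWAux.hasCliqueWidthLE_card (by omega) _⟩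
    exact CWAux.hasCliqueWidthLE_mono hle (Nat.sInf_mem hne)
  have hΨinj : Function.Injective Ψ := by
    intro S S' h
    apply CWAux.subG_injective p
    ext u v
    have h2 : (CWAux.subG p S).Adj (ε (ε.symm u)) (ε (ε.symm v)) ↔
        (CWAux.subG p S').Adj (ε (ε.symm u)) (ε (ε.symm v)) :=
      iff_of_eq (congrArg (fun G => G.Adj (ε.symm u) (ε.symm v)) h)
    rwa [Equiv.apply_symm_apply, Equiv.apply_symm_apply] at h2
  have hfin : {G : SimpleGraph (Fin n) | HasCliqueWidthLE G k}.Finite := Set.toFinite _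
  have hcount : 2 ^ (p ^ 3) ≤ {G : SimpleGraph (Fin n) | HasCliqueWidthLE G k}.ncard := by
    rw [Set.ncard_eq_toFinset_card _ hfin]
    have hinj := Finset.card_le_card_of_injOn
      (s := (Finset.univ : Finset (Finset (ZMod p × (ZMod p × ZMod p)))))
      (t := hfin.toFinset) Ψ
      (fun S _ => hfin.mem_toFinset.mpr (hΨmem S)) (Function.Injective.injOn hΨinj)
    calc 2 ^ (p ^ 3) = Fintype.card (Finset (ZMod p × (ZMod p × ZMod p))) := by
          rw [Fintype.card_finset]
          congr 1
          simp only [Fintype.card_prod, ZMod.card]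
          ring
      _ = (Finset.univ : Finset (Finset (ZMod p × (ZMod p × ZMod p)))).card :=
          Finset.card_univ.symm
      _ ≤ _ := hinj
  have hupper := CWAux.count_cliqueWidthLE (k := k) hk (n := n) hn1
  have harith := CWAux.main_arith (CWAux.one_le_Ek hk) hple
  rw [← hn] at harith
  exact absurd (lt_of_le_of_lt (le_trans hcount hupper) harith) (lt_irrefl _)
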